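/- Let X be the genus 2 curve glued from X₁ = Spec k[t³,t⁴,t⁵] and X₂ = Spec k[s] via t = s⁻¹. The dualizing sheaf ω of X is the O_X-submodule of the sheaf of rational 1-forms generated by dt/t³ and dt/t² on X₁ and by ds on X₂; moreover ω is not reflexive: the double dual (ω^∨)^∨ = Hom(Hom(ω, O_X), O_X) is strictly larger than ω, containing in addition dt/t. -/

import Mathlib

/-!
STATEMENT 18: Let X be the genus 2 curve glued from X₁ = Spec k[t³,t⁴,t⁵] and
X₂ = Spec k[s] via t = s⁻¹.  The dualizing sheaf ω of X is the O_X-submodule of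
the sheaf of rational 1-forms generated by dt/t³, dt/t² on X₁ and by ds on X₂;
moreover ω is not reflexive: the double dual (ω^∨)^∨ is strictly larger than ω,
containing in addition dt/t.

We identify the constant sheaf of rational 1-forms with K = k(t) by η ↦ η/dt,
so ω (computed from the residue characterization, as in the paper) has sections
ω₁ = O₁·⟨t⁻³, t⁻²⟩ over X₁ and ω₂ = O₂·⟨t⁻²⟩ over X₂ (ds = -t⁻²dt).  Duals of
subsheaves of K are computed chartwise by I ↦ {f : f·I ⊆ O}.  The claims:
(1) ω^∨ has sections O₁·⟨t⁶,t⁷,t⁸⟩ over X₁ (i.e. is generated by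
    t⁶∂_t, t⁷∂_t, t⁸∂_t) and O₂·⟨t²⟩ over X₂ (generated by ∂_s = -t²∂_t);
(2) the double dual contains dt/t (i.e. t⁻¹) over X₁, while ω does not:
    ω → (ω^∨)^∨ is not an isomorphism.
-/

open Submodule

set_option synthInstance.maxHeartbeats 1000000
set_option maxHeartbeats 2000000

section Aux

open Polynomial

variable {k : Type*} [Field k]

/-- The subalgebra of polynomials with vanishing coefficients in degrees 1 and 2. -/
def w2P3' : Subalgebra k (Polynomial k) where
  carrier := {p | p.coeff 1 = 0 ∧ p.coeff 2 = 0}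
  add_mem' := fun {a b} ha hb => by simp_all [coeff_add]
  mul_mem' := fun {a b} ha hb => by
    obtain ⟨a1, a2⟩ := ha; obtain ⟨b1, b2⟩ := hb
    constructor
    · have : (a*b).coeff 1 = a.coeff 0 * b.coeff 1 + a.coeff 1 * b.coeff 0 := by
        rw [coeff_mul, Finset.Nat.sum_antidiagonal_eq_sum_range_succ_mk]
        simp [Finset.sum_range_succ]
      simp [this, a1, b1]
    · have : (a*b).coeff 2
          = a.coeff 0 * b.coeff 2 + a.coeff 1 * b.coeff 1 + a.coeff 2 * b.coeff 0 := by
        rw [coeff_mul, Finset.Nat.sum_antidiagonal_eq_sum_range_succ_mk]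
        simp [Finset.sum_range_succ]
      simp [this, a1, a2, b1, b2]
  algebraMap_mem' := fun r => by simp [coeff_C]

lemma w2Xpow_mem (n : ℕ) :
    (X : k[X]) ^ (n + 3) ∈ Algebra.adjoin k ({X^3, X^4, X^5} : Set k[X]) := by
  induction n using Nat.strong_induction_on with
  | _ n ih =>
    match n with
    | 0 => exact Algebra.subset_adjoin (by simp)
    | 1 => exact Algebra.subset_adjoin (by simp)
    | 2 => exact Algebra.subset_adjoin (by simp)
    | (m+3) =>
      have h1 : (X : k[X]) ^ (m + 3 + 3) = X ^ 3 * X ^ (m + 3) := by ring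
      rw [h1]
      exact mul_mem (Algebra.subset_adjoin (by simp)) (ih m (by omega))

lemma w2mem_adjoin_of_coeff (p : k[X]) (h1 : p.coeff 1 = 0) (h2 : p.coeff 2 = 0) :
    p ∈ Algebra.adjoin k ({X^3, X^4, X^5} : Set k[X]) := by
  rw [p.as_sum_range' (p.natDegree + 1) (Nat.lt_succ_self _)]
  apply sum_mem
  intro i _
  rw [← C_mul_X_pow_eq_monomial]
  match i with
  | 0 => simpa using Subalgebra.algebraMap_mem (Algebra.adjoin k ({X^3, X^4, X^5} : Set k[X])) (p.coeff 0)
  | 1 => simp [h1]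
  | 2 => simp [h2]
  | (m+3) => exact mul_mem (Subalgebra.algebraMap_mem _ _) (w2Xpow_mem m)

lemma w2adjoin_eq : Algebra.adjoin k ({X^3, X^4, X^5} : Set k[X]) = w2P3' := by
  apply le_antisymm
  · apply Algebra.adjoin_le
    rintro p (rfl | rfl | rfl) <;> constructor <;> simp [coeff_X_pow]
  · intro p hp
    exact w2mem_adjoin_of_coeff p hp.1 hp.2

end Aux


variable (k : Type*) [Field k]

noncomputable abbrev w2T : RatFunc k := RatFunc.X

noncomputable def w2O1 : Subalgebra k (RatFunc k) :=
  Algebra.adjoin k {w2T k ^ 3, w2T k ^ 4, w2T k ^ 5}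

noncomputable def w2O2 : Subalgebra k (RatFunc k) :=
  Algebra.adjoin k {(w2T k)⁻¹}

/-- Sections of the dualizing sheaf ω over X₁: generated by dt/t³ and dt/t². -/
noncomputable def w2omega1 : Submodule (w2O1 k) (RatFunc k) :=
  Submodule.span (w2O1 k) {(w2T k ^ 3)⁻¹, (w2T k ^ 2)⁻¹}

/-- Sections of the dualizing sheaf ω over X₂: generated by ds = -dt/t². -/
noncomputable def w2omega2 : Submodule (w2O2 k) (RatFunc k) :=
  Submodule.span (w2O2 k) {-(w2T k ^ 2)⁻¹}

/-- The chartwise dual {f ∈ k(t) : f·I ⊆ S} of a module of sections I over a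
chart with coordinate ring S. -/
noncomputable def w2dual (S : Subalgebra k (RatFunc k)) (I : Submodule S (RatFunc k)) :
    Submodule S (RatFunc k) where
  carrier := {f | ∀ x ∈ I, f * x ∈ S}
  add_mem' := fun {a b} ha hb x hx => by
    simp only [Set.mem_setOf_eq] at *
    simpa [add_mul] using add_mem (ha x hx) (hb x hx)
  zero_mem' := fun x hx => by simpa using S.zero_mem
  smul_mem' := fun c f hf x hx => by
    simpa [Algebra.smul_def, mul_assoc] using mul_mem c.2 (hf x hx)

section Helpers

open Polynomial

variable {k}

/-- Multiplication submodule used to reduce dual membership to generators. -/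
noncomputable def w2mulMod (S : Subalgebra k (RatFunc k)) (f : RatFunc k) :
    Submodule S (RatFunc k) where
  carrier := {x | f * x ∈ S}
  add_mem' := fun {a b} ha hb => by
    simp only [Set.mem_setOf_eq] at *
    simpa [mul_add] using add_mem ha hb
  zero_mem' := by simpa using S.zero_mem
  smul_mem' := fun c x hx => by
    have : f * (c • x) = ↑c * (f * x) := by
      show f * (↑c * x) = ↑c * (f * x); ring
    simpa [this] using mul_mem c.2 hx

lemma w2mem_dual_span (S : Subalgebra k (RatFunc k)) (G : Set (RatFunc k))
    (f : RatFunc k) (h : ∀ g ∈ G, f * g ∈ S) :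
    f ∈ w2dual k S (Submodule.span S G) := by
  intro x hx
  exact (Submodule.span_le.2 h : Submodule.span S G ≤ w2mulMod S f) hx

lemma w2mem_O1_iff (f : RatFunc k) :
    f ∈ w2O1 k ↔ ∃ p : k[X], p.coeff 1 = 0 ∧ p.coeff 2 = 0 ∧
      algebraMap k[X] (RatFunc k) p = f := by
  have him : ({w2T k ^ 3, w2T k ^ 4, w2T k ^ 5} : Set (RatFunc k))
      = (IsScalarTower.toAlgHom k k[X] (RatFunc k)) '' ({X^3, X^4, X^5} : Set k[X]) := by
    simp [Set.image_insert_eq, map_pow, RatFunc.algebraMap_X]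
  rw [w2O1, him, Algebra.adjoin_image, w2adjoin_eq, Subalgebra.mem_map]
  constructor
  · rintro ⟨p, ⟨h1, h2⟩, hp⟩; exact ⟨p, h1, h2, hp⟩
  · rintro ⟨p, h1, h2, hp⟩; exact ⟨p, ⟨h1, h2⟩, hp⟩

lemma w2T_ne : (w2T k) ≠ 0 := RatFunc.X_ne_zero

lemma w2T_pow_mem_O1 (n : ℕ) : (w2T k) ^ (n + 3) ∈ w2O1 k := by
  rw [w2mem_O1_iff]
  exact ⟨X ^ (n + 3), by simp [coeff_X_pow], by simp [coeff_X_pow],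
    by simp [map_pow, RatFunc.algebraMap_X]⟩

lemma w2T_pow_mem' (n : ℕ) (hn : 3 ≤ n) : (w2T k) ^ n ∈ w2O1 k := by
  obtain ⟨m, rfl⟩ : ∃ m, n = m + 3 := ⟨n - 3, by omega⟩
  exact w2T_pow_mem_O1 m

lemma w2step (m n : ℕ) (h : n ≤ m) (h3 : 3 ≤ m - n) :
    w2T k ^ m * (w2T k ^ n)⁻¹ ∈ w2O1 k := by
  have : w2T k ^ m * (w2T k ^ n)⁻¹ = w2T k ^ (m - n) := (pow_sub₀ _ w2T_ne h).symm
  rw [this]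
  exact w2T_pow_mem' _ h3

end Helpers

theorem dualizing_sheaf_not_reflexive :
    -- (1) ω^∨ is generated by t⁶∂_t, t⁷∂_t, t⁸∂_t on X₁ and by ∂_s on X₂:
    w2dual k (w2O1 k) (w2omega1 k) =
      Submodule.span (w2O1 k) {w2T k ^ 6, w2T k ^ 7, w2T k ^ 8} ∧
    w2dual k (w2O2 k) (w2omega2 k) = Submodule.span (w2O2 k) {w2T k ^ 2} ∧
    -- (2) (ω^∨)^∨ contains the section dt/t over X₁, which ω does not:
    (w2T k)⁻¹ ∈ w2dual k (w2O1 k) (w2dual k (w2O1 k) (w2omega1 k)) ∧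
    (w2T k)⁻¹ ∉ w2omega1 k ∧
    -- so ω ⊆ (ω^∨)^∨ is strict: ω is not reflexive:
    w2omega1 k ≠ w2dual k (w2O1 k) (w2dual k (w2O1 k) (w2omega1 k)) := by
  have hT : (w2T k) ≠ 0 := w2T_ne
  -- Part 1 (chart X₁)
  have h1 : w2dual k (w2O1 k) (w2omega1 k) =
      Submodule.span (w2O1 k) {w2T k ^ 6, w2T k ^ 7, w2T k ^ 8} := by
    apply le_antisymm
    · intro f hf
      have hf3 : f * (w2T k ^ 3)⁻¹ ∈ w2O1 k := hf _ (subset_span (by simp))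
      have hf2 : f * (w2T k ^ 2)⁻¹ ∈ w2O1 k := hf _ (subset_span (by simp))
      obtain ⟨p, p1, p2, hp⟩ := (w2mem_O1_iff _).1 hf3
      obtain ⟨q, q1, q2, hq⟩ := (w2mem_O1_iff _).1 hf2
      have hpq : p * Polynomial.X = q := by
        apply RatFunc.algebraMap_injective k
        rw [map_mul, RatFunc.algebraMap_X, hp, hq]
        field_simp
      have p0 : p.coeff 0 = 0 := by
        have := congrArg (fun r => r.coeff 1) hpq
        simpa [Polynomial.coeff_mul_X, q1] using this
      have hdvd : Polynomial.X ^ 3 ∣ p := by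
        rw [Polynomial.X_pow_dvd_iff]
        intro d hd; interval_cases d <;> assumption
      obtain ⟨r, hr⟩ := hdvd
      have hdvd2 : Polynomial.X ^ 3 ∣
          (r - Polynomial.C (r.coeff 0) - Polynomial.C (r.coeff 1) * Polynomial.X
            - Polynomial.C (r.coeff 2) * Polynomial.X ^ 2) := by
        rw [Polynomial.X_pow_dvd_iff]
        intro d hd; interval_cases d <;>
          simp [Polynomial.coeff_C, Polynomial.coeff_X, Polynomial.coeff_X_pow]
      obtain ⟨s, hs⟩ := hdvd2
      have hrdec : r = Polynomial.C (r.coeff 0) + Polynomial.C (r.coeff 1) * Polynomial.X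
          + Polynomial.C (r.coeff 2) * Polynomial.X ^ 2 + s * Polynomial.X ^ 3 := by
        linear_combination hs
      have hf' : f = algebraMap (Polynomial k) (RatFunc k) p * (w2T k) ^ 3 := by
        rw [hp]; field_simp
      have m0 : algebraMap (Polynomial k) (RatFunc k)
          (Polynomial.C (r.coeff 0) + s * Polynomial.X ^ 3) ∈ w2O1 k := by
        rw [w2mem_O1_iff]
        refine ⟨_, ?_, ?_, rfl⟩ <;>
          simp [Polynomial.coeff_C, Polynomial.coeff_mul_X_pow']
      have m1 : algebraMap (Polynomial k) (RatFunc k) (Polynomial.C (r.coeff 1)) ∈ w2O1 k := by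
        rw [w2mem_O1_iff]
        exact ⟨_, by simp [Polynomial.coeff_C], by simp [Polynomial.coeff_C], rfl⟩
      have m2 : algebraMap (Polynomial k) (RatFunc k) (Polynomial.C (r.coeff 2)) ∈ w2O1 k := by
        rw [w2mem_O1_iff]
        exact ⟨_, by simp [Polynomial.coeff_C], by simp [Polynomial.coeff_C], rfl⟩
      have key : f = (⟨_, m0⟩ : w2O1 k) • (w2T k ^ 6)
          + (⟨_, m1⟩ : w2O1 k) • (w2T k ^ 7) + (⟨_, m2⟩ : w2O1 k) • (w2T k ^ 8) := by
        show f = algebraMap (Polynomial k) (RatFunc k)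
              (Polynomial.C (r.coeff 0) + s * Polynomial.X ^ 3) * (w2T k ^ 6)
            + algebraMap (Polynomial k) (RatFunc k) (Polynomial.C (r.coeff 1)) * (w2T k ^ 7)
            + algebraMap (Polynomial k) (RatFunc k) (Polynomial.C (r.coeff 2)) * (w2T k ^ 8)
        rw [hf', hr]
        conv_lhs => rw [hrdec]
        simp only [map_add, map_mul, map_pow, RatFunc.algebraMap_X]
        ring
      rw [key]
      refine add_mem (add_mem ?_ ?_) ?_ <;>
        exact smul_mem _ _ (subset_span (by simp))
    · rw [span_le]
      intro x hx
      simp only [Set.mem_insert_iff, Set.mem_singleton_iff] at hx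
      rcases hx with rfl | rfl | rfl <;>
      · rw [w2omega1]
        apply w2mem_dual_span
        intro g hg
        simp only [Set.mem_insert_iff, Set.mem_singleton_iff] at hg
        rcases hg with rfl | rfl
        · exact w2step _ 3 (by norm_num) (by norm_num)
        · exact w2step _ 2 (by norm_num) (by norm_num)
  -- Part 2 (chart X₂)
  have h2 : w2dual k (w2O2 k) (w2omega2 k) = Submodule.span (w2O2 k) {w2T k ^ 2} := by
    apply le_antisymm
    · intro f hf
      have hg : f * -(w2T k ^ 2)⁻¹ ∈ w2O2 k := hf _ (subset_span rfl)
      rw [mem_span_singleton]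
      refine ⟨⟨-(f * -(w2T k ^ 2)⁻¹), neg_mem hg⟩, ?_⟩
      show -(f * -(w2T k ^ 2)⁻¹) * w2T k ^ 2 = f
      field_simp
    · rw [span_le]
      intro x hx
      rw [Set.mem_singleton_iff] at hx
      subst hx
      rw [w2omega2]
      apply w2mem_dual_span
      intro g hg
      rw [Set.mem_singleton_iff] at hg
      subst hg
      have : w2T k ^ 2 * -(w2T k ^ 2)⁻¹ = -1 := by field_simp
      rw [this]
      exact neg_mem (one_mem _)
  -- Part 3
  have h3 : (w2T k)⁻¹ ∈ w2dual k (w2O1 k) (w2dual k (w2O1 k) (w2omega1 k)) := by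
    rw [h1]
    apply w2mem_dual_span
    intro g hg
    simp only [Set.mem_insert_iff, Set.mem_singleton_iff] at hg
    rcases hg with rfl | rfl | rfl
    · rw [show (w2T k)⁻¹ * w2T k ^ 6 = w2T k ^ 6 * (w2T k ^ 1)⁻¹ by rw [pow_one]; ring]
      exact w2step 6 1 (by norm_num) (by norm_num)
    · rw [show (w2T k)⁻¹ * w2T k ^ 7 = w2T k ^ 7 * (w2T k ^ 1)⁻¹ by rw [pow_one]; ring]
      exact w2step 7 1 (by norm_num) (by norm_num)
    · rw [show (w2T k)⁻¹ * w2T k ^ 8 = w2T k ^ 8 * (w2T k ^ 1)⁻¹ by rw [pow_one]; ring]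
      exact w2step 8 1 (by norm_num) (by norm_num)
  -- Part 4
  have h4 : (w2T k)⁻¹ ∉ w2omega1 k := by
    intro h
    rw [w2omega1, mem_span_pair] at h
    obtain ⟨a, b, hab⟩ := h
    obtain ⟨p, p1, p2, hp⟩ := (w2mem_O1_iff (a : RatFunc k)).1 a.2
    obtain ⟨q, q1, q2, hq⟩ := (w2mem_O1_iff (b : RatFunc k)).1 b.2
    have hab' : (a : RatFunc k) * (w2T k ^ 3)⁻¹ + (b : RatFunc k) * (w2T k ^ 2)⁻¹
        = (w2T k)⁻¹ := hab
    have heq : algebraMap (Polynomial k) (RatFunc k) (p + q * Polynomial.X)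
        = algebraMap (Polynomial k) (RatFunc k) (Polynomial.X ^ 2) := by
      have hx : ((a : RatFunc k) * (w2T k ^ 3)⁻¹ + (b : RatFunc k) * (w2T k ^ 2)⁻¹)
          * w2T k ^ 3 = (w2T k)⁻¹ * w2T k ^ 3 := by rw [hab']
      field_simp at hx
      have hx' : ((a : RatFunc k) + (b : RatFunc k) * w2T k) * w2T k ^ 6
          = w2T k ^ 2 * w2T k ^ 6 := by linear_combination w2T k ^ 6 * hx
      have hx'' := mul_right_cancel₀ (pow_ne_zero 6 hT) hx'
      simp only [map_add, map_mul, map_pow, RatFunc.algebraMap_X, hp, hq]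
      linear_combination hx''
    have hpoly : p + q * Polynomial.X = Polynomial.X ^ 2 :=
      RatFunc.algebraMap_injective k heq
    have h2c := congrArg (fun r => r.coeff 2) hpoly
    simp [p2, q1, Polynomial.coeff_mul_X, Polynomial.coeff_X_pow] at h2c
  -- Part 5
  refine ⟨h1, h2, h3, h4, ?_⟩
  intro h
  exact h4 (h ▸ h3)
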